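/- arXiv:1604.03615 — 2 statements merged into one kernel-verified Lean document; each statement's English description precedes it below -/
import Mathlib

section
/- Let 0 < d < 1, α > 0, and define π_h = V_h ∏_{t=1}^{h-1}(1-V_t) where V_t are independent with V_t ~ Beta(1-d, α+td). Then E[log π_h] = ψ(1-d) - ψ(α) + (1/d)(ψ(α/d) - ψ(α/d + h)). -/
open MeasureTheory ProbabilityTheory Real Filter Finset
open scoped ENNReal NNReal

noncomputable def betaPDF (a b x : ℝ) : ℝ≥0∞ :=
  ENNReal.ofReal (if 0 < x ∧ x < 1 then
    (Real.Gamma (a + b) / (Real.Gamma a * Real.Gamma b)) * x ^ (a - 1) * (1 - x) ^ (b - 1)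
    else 0)

/-- The Beta(a,b) distribution on ℝ. -/
noncomputable def betaMeasure (a b : ℝ) : Measure ℝ :=
  MeasureTheory.volume.withDensity (_root_.betaPDF a b)

/-- The digamma function ψ = (log Γ)'. -/
noncomputable def digamma (x : ℝ) : ℝ :=
  deriv (fun y => Real.log (Real.Gamma y)) x

/-- The trigamma function ψ₁ = (log Γ)''. -/
noncomputable def trigamma (x : ℝ) : ℝ :=
  deriv (deriv (fun y => Real.log (Real.Gamma y))) x

/-- Stick-breaking weight π_h = V_h ∏_{t=1}^{h-1} (1 - V_t), where `W t` plays the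
role of `V_{t+1}` (so `V_t = W (t-1)` for `t ≥ 1`). -/
noncomputable def stickWeight {Ω : Type*} (W : ℕ → Ω → ℝ) (h : ℕ) (ω : Ω) : ℝ :=
  W (h - 1) ω * ∏ t ∈ Finset.range (h - 1), (1 - W t ω)

section AuxProofs
open Set Metric

lemma betaIntegrand_integrableOn {a b : ℝ} (ha : 0 < a) (hb : 0 < b) :
    IntegrableOn (fun x : ℝ => x ^ (a - 1) * (1 - x) ^ (b - 1)) (Ioo 0 1) := by
  have hc : IntervalIntegrable (fun x : ℝ => (x:ℂ) ^ ((a:ℂ) - 1) * ((1:ℂ) - x) ^ ((b:ℂ) - 1))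
      MeasureTheory.volume 0 1 :=
    Complex.betaIntegral_convergent (by simpa using ha) (by simpa using hb)
  have hIoc : IntegrableOn (fun x : ℝ => (x:ℂ) ^ ((a:ℂ) - 1) * ((1:ℂ) - x) ^ ((b:ℂ) - 1))
      (Ioc 0 1) := by
    rwa [intervalIntegrable_iff_integrableOn_Ioc_of_le (by norm_num)] at hc
  have hre : IntegrableOn (fun x : ℝ =>
      ((x:ℂ) ^ ((a:ℂ) - 1) * ((1:ℂ) - x) ^ ((b:ℂ) - 1)).re) (Ioc 0 1) := hIoc.re
  have hmono : IntegrableOn (fun x : ℝ =>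
      ((x:ℂ) ^ ((a:ℂ) - 1) * ((1:ℂ) - x) ^ ((b:ℂ) - 1)).re) (Ioo 0 1) :=
    hre.mono_set Ioo_subset_Ioc_self
  refine hmono.congr_fun (fun x hx => ?_) measurableSet_Ioo
  have hx0 : (0:ℝ) ≤ x := le_of_lt hx.1
  have hx1 : (0:ℝ) ≤ 1 - x := by linarith [hx.2]
  have e1 : ((x ^ (a-1) : ℝ) : ℂ) = (x:ℂ) ^ ((a:ℂ) - 1) := by
    rw [Complex.ofReal_cpow hx0]; push_cast; ring_nf
  have e2 : (((1 - x) ^ (b-1) : ℝ) : ℂ) = ((1:ℂ) - x) ^ ((b:ℂ) - 1) := by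
    rw [Complex.ofReal_cpow hx1]; push_cast; ring_nf
  beta_reduce
  rw [← e1, ← e2, ← Complex.ofReal_mul, Complex.ofReal_re]

lemma abs_log_le {a x : ℝ} (ha : 0 < a) (hx : 0 < x) (hx1 : x < 1) :
    |Real.log x| ≤ (2 / a) * x ^ (-(a/2)) := by
  have hlx : Real.log x < 0 := Real.log_neg hx hx1
  rw [abs_of_neg hlx]
  have h1 : Real.log ((1/x) ^ (a/2)) ≤ (1/x) ^ (a/2) - 1 :=
    Real.log_le_sub_one_of_pos (Real.rpow_pos_of_pos (by positivity) _)
  rw [Real.log_rpow (by positivity), Real.log_div one_ne_zero hx.ne', Real.log_one] at h1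
  have h2 : (1/x) ^ (a/2) = x ^ (-(a/2)) := by
    rw [one_div, ← Real.rpow_neg_one x, ← Real.rpow_mul hx.le]; ring_nf
  rw [h2] at h1
  rw [div_mul_eq_mul_div, le_div_iff₀ ha]
  nlinarith [Real.rpow_pos_of_pos hx (-(a/2))]

lemma logBetaIntegrand_integrableOn {a b : ℝ} (ha : 0 < a) (hb : 0 < b) :
    IntegrableOn (fun x : ℝ => |Real.log x| * (x ^ (a - 1) * (1 - x) ^ (b - 1))) (Ioo 0 1) := by
  have hg : IntegrableOn (fun x : ℝ => (2/a) * (x ^ (a/2 - 1) * (1 - x) ^ (b - 1))) (Ioo 0 1) :=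
    (betaIntegrand_integrableOn (half_pos ha) hb).const_mul _
  refine Integrable.mono hg ?_ ?_
  · exact (Real.measurable_log.abs.mul
      ((by fun_prop : Measurable fun x:ℝ => x ^ (a-1)).mul
       (by fun_prop : Measurable fun x:ℝ => (1-x) ^ (b-1)))).aestronglyMeasurable
  · refine (ae_restrict_iff' measurableSet_Ioo).2 (Filter.Eventually.of_forall (fun x hx => ?_))
    have hx0 := hx.1; have hx1 := hx.2
    have h1x : (0:ℝ) ≤ 1 - x := by linarith
    have hb1 : (0:ℝ) ≤ (1 - x) ^ (b - 1) := Real.rpow_nonneg h1x _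
    have hxa : (0:ℝ) ≤ x ^ (a - 1) := Real.rpow_nonneg hx0.le _
    have h1 : (0:ℝ) ≤ |Real.log x| * (x ^ (a - 1) * (1 - x) ^ (b - 1)) := by positivity
    have h2 : (0:ℝ) ≤ (2/a) * (x ^ (a/2 - 1) * (1 - x) ^ (b - 1)) := by positivity
    rw [Real.norm_eq_abs, Real.norm_eq_abs, abs_of_nonneg h1, abs_of_nonneg h2]
    have key : |Real.log x| * x ^ (a - 1) ≤ (2/a) * x ^ (a/2 - 1) := by
      have h := abs_log_le ha hx0 hx1
      have h3 := mul_le_mul_of_nonneg_right h hxa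
      calc |Real.log x| * x ^ (a - 1) ≤ (2/a) * x ^ (-(a/2)) * x ^ (a-1) := h3
        _ = (2/a) * x ^ (a/2 - 1) := by
            rw [mul_assoc, ← Real.rpow_add hx0]; ring_nf
    calc |Real.log x| * (x ^ (a - 1) * (1 - x) ^ (b - 1))
        = (|Real.log x| * x ^ (a - 1)) * (1 - x) ^ (b - 1) := by ring
      _ ≤ ((2/a) * x ^ (a/2 - 1)) * (1 - x) ^ (b - 1) := mul_le_mul_of_nonneg_right key hb1
      _ = (2/a) * (x ^ (a/2 - 1) * (1 - x) ^ (b - 1)) := by ring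

lemma betaVal {a b : ℝ} (ha : 0 < a) (hb : 0 < b) :
    ∫ x in Ioo (0:ℝ) 1, x ^ (a - 1) * (1 - x) ^ (b - 1) =
      Real.Gamma a * Real.Gamma b / Real.Gamma (a + b) := by
  have key := Complex.Gamma_mul_Gamma_eq_betaIntegral (s := (a:ℂ)) (t := (b:ℂ))
    (by simpa using ha) (by simpa using hb)
  have hIoc : Complex.betaIntegral (a:ℂ) (b:ℂ) =
      ∫ x in Ioc (0:ℝ) 1, (x:ℂ) ^ ((a:ℂ) - 1) * ((1:ℂ) - x) ^ ((b:ℂ) - 1) := by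
    rw [Complex.betaIntegral, intervalIntegral.integral_of_le (by norm_num : (0:ℝ) ≤ 1)]
  have heq : ∀ x ∈ Ioc (0:ℝ) 1,
      (x:ℂ) ^ ((a:ℂ) - 1) * ((1:ℂ) - x) ^ ((b:ℂ) - 1)
        = ((x ^ (a-1) * (1-x) ^ (b-1) : ℝ) : ℂ) := by
    intro x hx
    have hx0 : (0:ℝ) ≤ x := le_of_lt hx.1
    have hx1 : (0:ℝ) ≤ 1 - x := by linarith [hx.2]
    have e1 : ((x ^ (a-1) : ℝ) : ℂ) = (x:ℂ) ^ ((a:ℂ) - 1) := by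
      rw [Complex.ofReal_cpow hx0]; push_cast; ring_nf
    have e2 : (((1 - x) ^ (b-1) : ℝ) : ℂ) = ((1:ℂ) - x) ^ ((b:ℂ) - 1) := by
      rw [Complex.ofReal_cpow hx1]; push_cast; ring_nf
    rw [← e1, ← e2, ← Complex.ofReal_mul]
  have h2 : Complex.betaIntegral (a:ℂ) (b:ℂ) =
      ((∫ x in Ioc (0:ℝ) 1, x ^ (a-1) * (1-x) ^ (b-1) : ℝ) : ℂ) := by
    rw [hIoc, setIntegral_congr_fun measurableSet_Ioc heq]
    exact integral_ofReal
  have hIooIoc : (∫ x in Ioo (0:ℝ) 1, x ^ (a-1) * (1-x) ^ (b-1))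
      = ∫ x in Ioc (0:ℝ) 1, x ^ (a-1) * (1-x) ^ (b-1) := by
    rw [← MeasureTheory.integral_Ioc_eq_integral_Ioo]
  rw [hIooIoc]
  have hG : Real.Gamma (a + b) ≠ 0 := (Real.Gamma_pos_of_pos (by linarith)).ne'
  have key2 : Real.Gamma a * Real.Gamma b =
      Real.Gamma (a + b) * ∫ x in Ioc (0:ℝ) 1, x ^ (a-1) * (1-x) ^ (b-1) := by
    have := key
    rw [h2, ← Complex.ofReal_add, Complex.Gamma_ofReal, Complex.Gamma_ofReal,
      Complex.Gamma_ofReal, ← Complex.ofReal_mul, ← Complex.ofReal_mul] at this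
    exact_mod_cast this
  rw [eq_div_iff hG]; linarith [key2]

lemma hasDerivAt_betaIntegral {a b : ℝ} (ha : 0 < a) (hb : 0 < b) :
    HasDerivAt (fun s => ∫ x in Ioo (0:ℝ) 1, x ^ (s - 1) * (1 - x) ^ (b - 1))
      (∫ x in Ioo (0:ℝ) 1, Real.log x * (x ^ (a - 1) * (1 - x) ^ (b - 1))) a := by
  have mF : ∀ s : ℝ, AEStronglyMeasurable (fun x : ℝ => x ^ (s - 1) * (1 - x) ^ (b - 1))
      (volume.restrict (Ioo (0:ℝ) 1)) := fun s =>
    ((by fun_prop : Measurable fun x:ℝ => x ^ (s-1) * (1-x) ^ (b-1))).aestronglyMeasurable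
  have mF' : AEStronglyMeasurable
      (fun x : ℝ => Real.log x * (x ^ (a - 1) * (1 - x) ^ (b - 1)))
      (volume.restrict (Ioo (0:ℝ) 1)) :=
    (Real.measurable_log.mul (by fun_prop)).aestronglyMeasurable
  have key := hasDerivAt_integral_of_dominated_loc_of_deriv_le (μ := volume.restrict (Ioo (0:ℝ) 1))
    (F := fun s (x : ℝ) => x ^ (s - 1) * (1 - x) ^ (b - 1))
    (F' := fun s (x : ℝ) => Real.log x * (x ^ (s - 1) * (1 - x) ^ (b - 1)))
    (x₀ := a)
    (bound := fun x : ℝ => |Real.log x| * (x ^ (a/2 - 1) * (1 - x) ^ (b - 1)))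
    (Metric.ball_mem_nhds a (half_pos ha)) (Filter.Eventually.of_forall mF) (betaIntegrand_integrableOn ha hb) mF'
    ?_ (logBetaIntegrand_integrableOn (half_pos ha) hb) ?_
  · exact key.2
  · refine (ae_restrict_iff' measurableSet_Ioo).2 (Filter.Eventually.of_forall fun x hx s hs => ?_)
    have hx0 := hx.1; have hx1 := hx.2
    have hs2 : a/2 - 1 ≤ s - 1 := by
      have := abs_lt.1 (mem_ball_iff_norm.1 hs); linarith [this.1]
    have hrp : x ^ (s - 1) ≤ x ^ (a/2 - 1) :=
      Real.rpow_le_rpow_of_exponent_ge hx0 hx1.le hs2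
    have h1x : (0:ℝ) ≤ 1 - x := by linarith
    rw [Real.norm_eq_abs, abs_mul, abs_of_nonneg (by positivity :
        (0:ℝ) ≤ x ^ (s-1) * (1-x) ^ (b-1))]
    have : x ^ (s-1) * (1-x) ^ (b-1) ≤ x ^ (a/2-1) * (1-x) ^ (b-1) :=
      mul_le_mul_of_nonneg_right hrp (Real.rpow_nonneg h1x _)
    exact mul_le_mul_of_nonneg_left this (abs_nonneg _)
  · refine (ae_restrict_iff' measurableSet_Ioo).2 (Filter.Eventually.of_forall fun x hx s _ => ?_)
    have h0 : HasDerivAt (fun y : ℝ => x ^ y) (x ^ (s-1) * Real.log x) (s-1) :=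
      (Real.hasStrictDerivAt_const_rpow hx.1 (s-1)).hasDerivAt
    have h1 : HasDerivAt (fun s : ℝ => s - 1) 1 s := (hasDerivAt_id s).sub_const 1
    have h2 : HasDerivAt (fun s : ℝ => x ^ (s - 1)) (x ^ (s-1) * Real.log x * 1) s :=
      HasDerivAt.comp s h0 h1
    have h3 := h2.mul_const ((1-x) ^ (b-1))
    exact h3.congr_deriv (by ring)

lemma hasDerivAt_logGamma {x : ℝ} (hx : 0 < x) :
    HasDerivAt (fun y => Real.log (Real.Gamma y)) (digamma x) x := by
  have hd : DifferentiableAt ℝ Real.Gamma x :=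
    Real.differentiableAt_Gamma (fun m => by
      have : (0:ℝ) ≤ m := Nat.cast_nonneg m
      intro hc; rw [hc] at hx; linarith)
  have h : DifferentiableAt ℝ (fun y => Real.log (Real.Gamma y)) x :=
    hd.log (Real.Gamma_pos_of_pos hx).ne'
  simpa [digamma] using h.hasDerivAt

lemma digamma_add_one {x : ℝ} (hx : 0 < x) : digamma (x + 1) = digamma x + 1 / x := by
  have H1 : HasDerivAt (fun y : ℝ => Real.log (Real.Gamma (y + 1))) (digamma (x+1)) x := by
    have := HasDerivAt.comp x (hasDerivAt_logGamma (by linarith : (0:ℝ) < x + 1))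
      ((hasDerivAt_id x).add_const 1)
    simpa [Function.comp_def] using this
  have H2 : HasDerivAt (fun y : ℝ => Real.log y + Real.log (Real.Gamma y))
      (1/x + digamma x) x := by
    have := (Real.hasDerivAt_log hx.ne').add (hasDerivAt_logGamma hx)
    simpa [one_div, Pi.add_def] using this
  have heq : (fun y : ℝ => Real.log (Real.Gamma (y + 1)))
      =ᶠ[nhds x] (fun y : ℝ => Real.log y + Real.log (Real.Gamma y)) := by
    filter_upwards [IsOpen.mem_nhds isOpen_Ioi hx] with y hy
    rw [Real.Gamma_add_one (ne_of_gt hy),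
      Real.log_mul (ne_of_gt hy) (Real.Gamma_pos_of_pos hy).ne']
  have H1' : HasDerivAt (fun y : ℝ => Real.log y + Real.log (Real.Gamma y))
      (digamma (x+1)) x := H1.congr_of_eventuallyEq heq.symm
  have := H1'.unique H2
  linarith

lemma beta_logMoment {a b : ℝ} (ha : 0 < a) (hb : 0 < b) :
    ∫ x in Ioo (0:ℝ) 1, Real.log x * (x ^ (a - 1) * (1 - x) ^ (b - 1)) =
      (Real.Gamma a * Real.Gamma b / Real.Gamma (a + b)) * (digamma a - digamma (a + b)) := by
  set G : ℝ → ℝ := fun s => ∫ x in Ioo (0:ℝ) 1, x ^ (s - 1) * (1 - x) ^ (b - 1) with hGdef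
  set I : ℝ := ∫ x in Ioo (0:ℝ) 1, Real.log x * (x ^ (a - 1) * (1 - x) ^ (b - 1)) with hIdef
  have hG : HasDerivAt G I a := hasDerivAt_betaIntegral ha hb
  have hGa : G a = Real.Gamma a * Real.Gamma b / Real.Gamma (a + b) := betaVal ha hb
  have hGapos : 0 < G a := by
    rw [hGa]
    have := Real.Gamma_pos_of_pos ha
    have := Real.Gamma_pos_of_pos hb
    have := Real.Gamma_pos_of_pos (by linarith : 0 < a + b)
    positivity
  have Hlog : HasDerivAt (fun s => Real.log (G s)) (I / G a) a := hG.log hGapos.ne'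
  have heq : (fun s => Real.log (G s)) =ᶠ[nhds a]
      (fun s => Real.log (Real.Gamma s) + Real.log (Real.Gamma b)
        - Real.log (Real.Gamma (s + b))) := by
    filter_upwards [IsOpen.mem_nhds isOpen_Ioi ha] with s hs
    have hsb : (0:ℝ) < s + b := by have : (0:ℝ) < s := hs; linarith
    have hs0 : (0:ℝ) < s := hs
    have g1 := Real.Gamma_pos_of_pos hs0
    have g2 := Real.Gamma_pos_of_pos hb
    have g3 := Real.Gamma_pos_of_pos hsb
    have hGs : G s = Real.Gamma s * Real.Gamma b / Real.Gamma (s + b) := betaVal hs0 hb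
    rw [hGs, Real.log_div (by positivity) g3.ne',
      Real.log_mul g1.ne' g2.ne']
  have HlogR : HasDerivAt (fun s => Real.log (Real.Gamma s) + Real.log (Real.Gamma b)
      - Real.log (Real.Gamma (s + b))) (digamma a - digamma (a + b)) a := by
    have h1 : HasDerivAt (fun s : ℝ => Real.log (Real.Gamma (s + b))) (digamma (a + b)) a := by
      have := HasDerivAt.comp a (hasDerivAt_logGamma (by linarith : (0:ℝ) < a + b))
        ((hasDerivAt_id a).add_const b)
      simpa [Function.comp_def] using this
    exact ((hasDerivAt_logGamma ha).add_const _).sub h1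
  have Huniq : I / G a = digamma a - digamma (a + b) :=
    (Hlog.congr_of_eventuallyEq heq.symm).unique HlogR
  have : I = G a * (digamma a - digamma (a + b)) := by
    field_simp at Huniq
    linarith [Huniq]
  rw [this, hGa]

lemma integral_Ioo_reflect (g : ℝ → ℝ) :
    ∫ x in Ioo (0:ℝ) 1, g (1 - x) = ∫ x in Ioo (0:ℝ) 1, g x := by
  rw [← integral_indicator measurableSet_Ioo, ← integral_indicator measurableSet_Ioo]
  have key : ∀ x : ℝ, (Ioo (0:ℝ) 1).indicator (fun y => g (1 - y)) x
      = (Ioo (0:ℝ) 1).indicator g (1 - x) := by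
    intro x
    by_cases hx : x ∈ Ioo (0:ℝ) 1
    · have hx' : 1 - x ∈ Ioo (0:ℝ) 1 := by
        simp only [Set.mem_Ioo] at hx ⊢; constructor <;> linarith [hx.1, hx.2]
      rw [Set.indicator_of_mem hx, Set.indicator_of_mem hx']
    · have hx' : 1 - x ∉ Ioo (0:ℝ) 1 := by
        simp only [Set.mem_Ioo] at hx ⊢
        intro hc; exact hx ⟨by linarith [hc.2], by linarith [hc.1]⟩
      rw [Set.indicator_of_notMem hx, Set.indicator_of_notMem hx']
  simp_rw [key]
  exact integral_sub_left_eq_self ((Ioo (0:ℝ) 1).indicator g) MeasureTheory.volume 1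

noncomputable def betaPdfNN (a b : ℝ) : ℝ → ℝ≥0 := fun x =>
  Real.toNNReal (if 0 < x ∧ x < 1 then
    (Real.Gamma (a + b) / (Real.Gamma a * Real.Gamma b)) * x ^ (a - 1) * (1 - x) ^ (b - 1)
    else 0)

lemma betaPdfNN_measurable (a b : ℝ) : Measurable (betaPdfNN a b) := by
  apply Measurable.real_toNNReal
  have hs : MeasurableSet {x : ℝ | 0 < x ∧ x < 1} := by
    have : {x : ℝ | 0 < x ∧ x < 1} = Ioo (0:ℝ) 1 := rfl
    rw [this]; exact measurableSet_Ioo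
  exact Measurable.ite hs (by fun_prop) measurable_const

lemma betaMeasure_eq (a b : ℝ) :
    _root_.betaMeasure a b = MeasureTheory.volume.withDensity (fun x => (betaPdfNN a b x : ℝ≥0∞)) := rfl

lemma beta_integral_eq {a b : ℝ} (ha : 0 < a) (hb : 0 < b) (g : ℝ → ℝ) :
    ∫ x, g x ∂(_root_.betaMeasure a b) =
      ∫ x in Ioo (0:ℝ) 1,
        ((Real.Gamma (a + b) / (Real.Gamma a * Real.Gamma b)) * x ^ (a - 1) * (1 - x) ^ (b - 1))
          * g x := by
  rw [betaMeasure_eq, integral_withDensity_eq_integral_smul (betaPdfNN_measurable a b) g,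
    ← integral_indicator measurableSet_Ioo]
  congr 1
  ext x
  by_cases hx : x ∈ Ioo (0:ℝ) 1
  · have hx' : 0 < x ∧ x < 1 := hx
    have hnn : (0:ℝ) ≤ (Real.Gamma (a + b) / (Real.Gamma a * Real.Gamma b)) * x ^ (a - 1)
        * (1 - x) ^ (b - 1) := by
      have g1 := Real.Gamma_pos_of_pos ha
      have g2 := Real.Gamma_pos_of_pos hb
      have g3 := Real.Gamma_pos_of_pos (by linarith : 0 < a + b)
      have h1 : (0:ℝ) ≤ x ^ (a-1) := Real.rpow_nonneg hx'.1.le _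
      have h2 : (0:ℝ) ≤ (1-x) ^ (b-1) := Real.rpow_nonneg (by linarith [hx'.2]) _
      positivity
    rw [Set.indicator_of_mem hx]
    simp only [betaPdfNN, if_pos hx', NNReal.smul_def, Real.coe_toNNReal _ hnn, smul_eq_mul]
  · have hx' : ¬ (0 < x ∧ x < 1) := hx
    rw [Set.indicator_of_notMem hx]
    simp [betaPdfNN, if_neg hx']

lemma beta_integrable_iff {a b : ℝ} (g : ℝ → ℝ) :
    Integrable g (_root_.betaMeasure a b) ↔
      Integrable (fun x => betaPdfNN a b x • g x) MeasureTheory.volume := by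
  rw [betaMeasure_eq]
  exact (integrable_withDensity_iff_integrable_smul (μ := MeasureTheory.volume) (betaPdfNN_measurable a b) (g := g))

lemma log1mBetaIntegrand_integrableOn {a b : ℝ} (ha : 0 < a) (hb : 0 < b) :
    IntegrableOn (fun x : ℝ => |Real.log (1 - x)| * (x ^ (a - 1) * (1 - x) ^ (b - 1)))
      (Ioo 0 1) := by
  have hg : IntegrableOn (fun x : ℝ => (2/b) * (x ^ (a - 1) * (1 - x) ^ (b/2 - 1))) (Ioo 0 1) :=
    (betaIntegrand_integrableOn ha (half_pos hb)).const_mul _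
  refine Integrable.mono hg ?_ ?_
  · exact ((Real.measurable_log.comp (measurable_const.sub measurable_id)).abs.mul
      (by fun_prop)).aestronglyMeasurable
  · refine (ae_restrict_iff' measurableSet_Ioo).2 (Filter.Eventually.of_forall (fun x hx => ?_))
    have hx0 := hx.1; have hx1 := hx.2
    have h1x0 : (0:ℝ) < 1 - x := by linarith
    have h1x1 : 1 - x < 1 := by linarith
    have hxa : (0:ℝ) ≤ x ^ (a - 1) := Real.rpow_nonneg hx0.le _
    have h1 : (0:ℝ) ≤ |Real.log (1-x)| * (x ^ (a - 1) * (1 - x) ^ (b - 1)) := by positivity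
    have h2 : (0:ℝ) ≤ (2/b) * (x ^ (a - 1) * (1 - x) ^ (b/2 - 1)) := by positivity
    rw [Real.norm_eq_abs, Real.norm_eq_abs, abs_of_nonneg h1, abs_of_nonneg h2]
    have key : |Real.log (1-x)| * (1-x) ^ (b - 1) ≤ (2/b) * (1-x) ^ (b/2 - 1) := by
      have h := abs_log_le hb h1x0 h1x1
      have h3 := mul_le_mul_of_nonneg_right h (Real.rpow_nonneg h1x0.le (b-1))
      calc |Real.log (1-x)| * (1-x) ^ (b - 1) ≤ (2/b) * (1-x) ^ (-(b/2)) * (1-x) ^ (b-1) := h3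
        _ = (2/b) * (1-x) ^ (b/2 - 1) := by
            rw [mul_assoc, ← Real.rpow_add h1x0]; ring_nf
    calc |Real.log (1-x)| * (x ^ (a - 1) * (1 - x) ^ (b - 1))
        = (|Real.log (1-x)| * (1-x) ^ (b - 1)) * x ^ (a - 1) := by ring
      _ ≤ ((2/b) * (1-x) ^ (b/2 - 1)) * x ^ (a - 1) := mul_le_mul_of_nonneg_right key hxa
      _ = (2/b) * (x ^ (a - 1) * (1 - x) ^ (b/2 - 1)) := by ring

lemma integrable_mul_beta {a b : ℝ} (ha : 0 < a) (hb : 0 < b) {g : ℝ → ℝ}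
    (hm : Measurable g)
    (hint : IntegrableOn (fun x : ℝ => |g x| * (x ^ (a - 1) * (1 - x) ^ (b - 1))) (Ioo 0 1)) :
    Integrable g (_root_.betaMeasure a b) := by
  rw [beta_integrable_iff]
  set C := Real.Gamma (a + b) / (Real.Gamma a * Real.Gamma b) with hC
  have hCpos : 0 < C := by
    have g1 := Real.Gamma_pos_of_pos ha
    have g2 := Real.Gamma_pos_of_pos hb
    have g3 := Real.Gamma_pos_of_pos (by linarith : 0 < a + b)
    positivity
  have hbig : Integrable (fun x : ℝ =>
      (Ioo (0:ℝ) 1).indicator (fun x => C * (|g x| * (x ^ (a-1) * (1-x) ^ (b-1)))) x)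
      MeasureTheory.volume := by
    rw [integrable_indicator_iff measurableSet_Ioo]
    exact hint.const_mul C
  refine hbig.mono' ?_ ?_
  · exact ((betaPdfNN_measurable a b).coe_nnreal_real.mul hm).aestronglyMeasurable
  · refine Filter.Eventually.of_forall (fun x => ?_)
    by_cases hx : x ∈ Ioo (0:ℝ) 1
    · have hx' : 0 < x ∧ x < 1 := hx
      have h1 : (0:ℝ) ≤ x ^ (a-1) := Real.rpow_nonneg hx'.1.le _
      have h2 : (0:ℝ) ≤ (1-x) ^ (b-1) := Real.rpow_nonneg (by linarith [hx'.2]) _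
      rw [Set.indicator_of_mem hx, Real.norm_eq_abs, NNReal.smul_def, smul_eq_mul]
      have hnn : (0:ℝ) ≤ C * x ^ (a - 1) * (1 - x) ^ (b - 1) := by positivity
      simp only [betaPdfNN, if_pos hx', ← hC, Real.coe_toNNReal _ hnn]
      rw [abs_mul, abs_of_nonneg hnn]
      calc C * x ^ (a-1) * (1-x) ^ (b-1) * |g x|
          = C * (|g x| * (x ^ (a-1) * (1-x) ^ (b-1))) := by ring
        _ ≤ C * (|g x| * (x ^ (a-1) * (1-x) ^ (b-1))) := le_rfl
    · have hx' : ¬ (0 < x ∧ x < 1) := hx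
      rw [Set.indicator_of_notMem hx]
      simp [betaPdfNN, if_neg hx']

lemma betaMeasure_log_moment {a b : ℝ} (ha : 0 < a) (hb : 0 < b) :
    ∫ x, Real.log x ∂(_root_.betaMeasure a b) = digamma a - digamma (a + b) := by
  rw [beta_integral_eq ha hb]
  have g1 := Real.Gamma_pos_of_pos ha
  have g2 := Real.Gamma_pos_of_pos hb
  have g3 := Real.Gamma_pos_of_pos (by linarith : 0 < a + b)
  set C := Real.Gamma (a + b) / (Real.Gamma a * Real.Gamma b) with hC
  have : ∀ x : ℝ, C * x ^ (a - 1) * (1 - x) ^ (b - 1) * Real.log x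
      = C * (Real.log x * (x ^ (a - 1) * (1 - x) ^ (b - 1))) := fun x => by ring
  simp_rw [this]
  rw [MeasureTheory.integral_const_mul, beta_logMoment ha hb]
  rw [hC]
  field_simp

lemma betaMeasure_log1m_moment {a b : ℝ} (ha : 0 < a) (hb : 0 < b) :
    ∫ x, Real.log (1 - x) ∂(_root_.betaMeasure a b) = digamma b - digamma (a + b) := by
  rw [beta_integral_eq ha hb]
  have g1 := Real.Gamma_pos_of_pos ha
  have g2 := Real.Gamma_pos_of_pos hb
  have g3 := Real.Gamma_pos_of_pos (by linarith : 0 < a + b)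
  set C := Real.Gamma (a + b) / (Real.Gamma a * Real.Gamma b) with hC
  have e1 : ∀ x : ℝ, C * x ^ (a - 1) * (1 - x) ^ (b - 1) * Real.log (1 - x)
      = C * ((fun y => Real.log y * (y ^ (b - 1) * (1 - y) ^ (a - 1))) (1 - x)) := fun x => by
    simp only [sub_sub_cancel]; ring
  simp_rw [e1]
  rw [MeasureTheory.integral_const_mul,
    show (∫ x in Ioo (0:ℝ) 1, Real.log (1-x) * ((1-x) ^ (b-1) * (1-(1-x)) ^ (a-1)))
        = ∫ y in Ioo (0:ℝ) 1, Real.log y * (y ^ (b-1) * (1-y) ^ (a-1)) from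
      integral_Ioo_reflect (fun y => Real.log y * (y ^ (b-1) * (1-y) ^ (a-1))),
    beta_logMoment hb ha]
  rw [hC, add_comm b a]
  field_simp

lemma integrable_log_beta {a b : ℝ} (ha : 0 < a) (hb : 0 < b) :
    Integrable Real.log (_root_.betaMeasure a b) :=
  integrable_mul_beta ha hb Real.measurable_log (logBetaIntegrand_integrableOn ha hb)

lemma integrable_log1m_beta {a b : ℝ} (ha : 0 < a) (hb : 0 < b) :
    Integrable (fun x => Real.log (1 - x)) (_root_.betaMeasure a b) :=
  integrable_mul_beta ha hb
    (Real.measurable_log.comp (measurable_const.sub measurable_id))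
    (log1mBetaIntegrand_integrableOn ha hb)

lemma betaPDF_measurable (a b : ℝ) : Measurable (_root_.betaPDF a b) := by
  apply Measurable.ennreal_ofReal
  have hs : MeasurableSet {x : ℝ | 0 < x ∧ x < 1} := by
    have : {x : ℝ | 0 < x ∧ x < 1} = Ioo (0:ℝ) 1 := rfl
    rw [this]; exact measurableSet_Ioo
  exact Measurable.ite hs (by fun_prop) measurable_const

lemma betaMeasure_ne_zero {a b : ℝ} (ha : 0 < a) (hb : 0 < b) : _root_.betaMeasure a b ≠ 0 := by
  intro hc
  have h1 : _root_.betaMeasure a b (Ioo 0 1) = 0 := by simp [hc]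
  rw [_root_.betaMeasure, withDensity_apply _ measurableSet_Ioo] at h1
  have hpos : 0 < ∫⁻ x in Ioo (0:ℝ) 1, _root_.betaPDF a b x ∂MeasureTheory.volume := by
    have g1 := Real.Gamma_pos_of_pos ha
    have g2 := Real.Gamma_pos_of_pos hb
    have g3 := Real.Gamma_pos_of_pos (by linarith : 0 < a + b)
    have hC : 0 < Real.Gamma (a + b) / (Real.Gamma a * Real.Gamma b) := by positivity
    have hlb : ∀ x ∈ Ioo (0:ℝ) 1, _root_.betaPDF a b x ≠ 0 := by
      intro x hx
      have hx' : 0 < x ∧ x < 1 := hx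
      have h1' : (0:ℝ) < x ^ (a-1) := Real.rpow_pos_of_pos hx'.1 _
      have h2' : (0:ℝ) < (1-x) ^ (b-1) := Real.rpow_pos_of_pos (by linarith [hx'.2]) _
      simp only [_root_.betaPDF, if_pos hx']
      exact (ENNReal.ofReal_pos.2 (by positivity)).ne'
    rw [lintegral_pos_iff_support ((betaPDF_measurable a b))]
    refine lt_of_lt_of_le ?_ (measure_mono (fun x hx => hlb x hx))
    simp [Real.volume_Ioo]
  rw [h1] at hpos; exact lt_irrefl 0 hpos

lemma aemeasurable_of_law {Ω : Type*} [MeasurableSpace Ω] {μ : Measure Ω} {f : Ω → ℝ}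
    {a b : ℝ} (ha : 0 < a) (hb : 0 < b) (hlaw : Measure.map f μ = _root_.betaMeasure a b) :
    AEMeasurable f μ := by
  by_contra hc
  rw [Measure.map_of_not_aemeasurable hc] at hlaw
  exact betaMeasure_ne_zero ha hb hlaw.symm

lemma ae_mem_Ioo_of_law {Ω : Type*} [MeasurableSpace Ω] {μ : Measure Ω} {f : Ω → ℝ}
    {a b : ℝ} (ha : 0 < a) (hb : 0 < b) (hlaw : Measure.map f μ = _root_.betaMeasure a b) :
    ∀ᵐ ω ∂μ, f ω ∈ Ioo (0:ℝ) 1 := by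
  have hm := aemeasurable_of_law ha hb hlaw
  have hcompl : _root_.betaMeasure a b (Ioo (0:ℝ) 1)ᶜ = 0 := by
    rw [_root_.betaMeasure, withDensity_apply _ measurableSet_Ioo.compl]
    rw [MeasureTheory.setLIntegral_congr_fun measurableSet_Ioo.compl
      (fun x hx => ?_), lintegral_zero]
    have hx' : ¬ (0 < x ∧ x < 1) := hx
    simp [_root_.betaPDF, if_neg hx']
  have := Measure.map_apply_of_aemeasurable hm (measurableSet_Ioo (a := (0:ℝ)) (b := 1)).compl
  rw [hlaw, hcompl] at this
  have h0 : μ (f ⁻¹' (Ioo (0:ℝ) 1)ᶜ) = 0 := this.symm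
  have hset : {ω | ¬ f ω ∈ Ioo (0:ℝ) 1} = f ⁻¹' (Ioo (0:ℝ) 1)ᶜ := rfl
  rw [ae_iff, hset]
  exact h0

lemma key_algebra (d α : ℝ) (hd : 0 < d) (hα : 0 < α) (h : ℕ) (hh : 1 ≤ h) :
    (digamma (1-d) - digamma (1 - d + (α + (((h-1 : ℕ) : ℝ) + 1) * d)))
      + ∑ t ∈ Finset.range (h-1),
          (digamma (α + ((t : ℝ) + 1) * d) - digamma (1 - d + (α + ((t : ℝ) + 1) * d)))
    = digamma (1-d) - digamma α + (1/d) * (digamma (α/d) - digamma (α/d + (h : ℝ))) := by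
  have hpt : ∀ t : ℕ, (0:ℝ) < α + (t : ℝ) * d := by
    intro t
    have h1 : (0:ℝ) ≤ (t:ℝ) := Nat.cast_nonneg t
    nlinarith
  set f : ℕ → ℝ := fun n => digamma (α + (n : ℝ) * d) with hf
  have hstep : ∀ t ∈ Finset.range (h-1),
      digamma (α + ((t:ℝ)+1)*d) - digamma (1 - d + (α + ((t:ℝ)+1)*d))
        = (f (t+1) - f t) - 1/(α + (t:ℝ)*d) := by
    intro t _
    have h1 : (1:ℝ) - d + (α + ((t:ℝ)+1)*d) = (α + (t:ℝ)*d) + 1 := by ring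
    have h2 := digamma_add_one (hpt t)
    have h3 : f (t+1) = digamma (α + ((t:ℝ)+1)*d) := by
      simp only [hf]; push_cast; ring_nf
    rw [h1, h2, h3]
    ring
  rw [Finset.sum_congr rfl hstep, Finset.sum_sub_distrib, Finset.sum_range_sub f (h-1)]
  have hE : (1:ℝ) - d + (α + (((h-1:ℕ):ℝ)+1)*d) = (α + ((h-1:ℕ):ℝ)*d) + 1 := by ring
  rw [hE, digamma_add_one (hpt (h-1))]
  have hf0 : f 0 = digamma α := by simp [hf]
  have hS : ∑ t ∈ Finset.range h, 1/(α + (t:ℝ)*d)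
      = (∑ t ∈ Finset.range (h-1), 1/(α+(t:ℝ)*d)) + 1/(α+((h-1:ℕ):ℝ)*d) := by
    conv_lhs => rw [show h = (h-1)+1 from (Nat.succ_pred_eq_of_pos hh).symm]
    rw [Finset.sum_range_succ]
  have hRHS : (1/d) * (digamma (α/d) - digamma (α/d + (h:ℝ)))
      = - ∑ t ∈ Finset.range h, 1/(α + (t:ℝ)*d) := by
    have hg : ∀ t : ℕ, digamma (α/d + ((t+1 : ℕ):ℝ)) - digamma (α/d + (t:ℝ))
        = d * (1/(α + (t:ℝ)*d)) := by
      intro t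
      have h1 : (0:ℝ) ≤ (t:ℝ) := Nat.cast_nonneg t
      have hpos : (0:ℝ) < α/d + (t:ℝ) := by positivity
      have e1 : α/d + ((t+1 : ℕ):ℝ) = (α/d + (t:ℝ)) + 1 := by push_cast; ring
      rw [e1, digamma_add_one hpos]
      have e2 : α/d + (t:ℝ) = (α + (t:ℝ)*d)/d := by field_simp
      rw [e2, one_div_div]
      have := (hpt t).ne'
      field_simp
      ring
    have htel : ∑ t ∈ Finset.range h,
        (digamma (α/d + ((t+1:ℕ):ℝ)) - digamma (α/d + (t:ℝ)))
          = digamma (α/d + (h:ℝ)) - digamma (α/d) := by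
      simpa using Finset.sum_range_sub (fun n => digamma (α/d + (n:ℝ))) h
    rw [Finset.sum_congr rfl (fun t _ => hg t), ← Finset.mul_sum] at htel
    have hdq : digamma (α/d) - digamma (α/d + (h:ℝ))
        = -(d * ∑ t ∈ Finset.range h, 1/(α + (t:ℝ)*d)) := by linarith
    rw [hdq]
    rw [mul_neg, ← mul_assoc, one_div_mul_cancel hd.ne', one_mul]
  rw [hRHS, hf0]
  rw [hS]
  ring

theorem pdp_expected_log_stick_weight {Ω : Type*} [MeasurableSpace Ω] (μ : Measure Ω)
    [IsProbabilityMeasure μ] (d α : ℝ) (hd : 0 < d) (hd1 : d < 1) (hα : 0 < α)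
    (W : ℕ → Ω → ℝ)
    (hind : iIndepFun W μ)
    (hlaw : ∀ t : ℕ, Measure.map (W t) μ = _root_.betaMeasure (1 - d) (α + (t + 1) * d))
    (h : ℕ) (hh : 1 ≤ h) :
    ∫ ω, Real.log (stickWeight W h ω) ∂μ =
      digamma (1 - d) - digamma α + (1 / d) * (digamma (α / d) - digamma (α / d + h)) := by
  have ha : (0:ℝ) < 1 - d := by linarith
  have hb : ∀ t : ℕ, (0:ℝ) < α + ((t:ℝ) + 1) * d := by
    intro t
    have h1 : (0:ℝ) ≤ (t:ℝ) := Nat.cast_nonneg t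
    nlinarith
  have hMeas : ∀ t : ℕ, AEMeasurable (W t) μ :=
    fun t => aemeasurable_of_law ha (hb t) (hlaw t)
  have hmemIoo : ∀ t : ℕ, ∀ᵐ ω ∂μ, W t ω ∈ Ioo (0:ℝ) 1 :=
    fun t => ae_mem_Ioo_of_law ha (hb t) (hlaw t)
  -- integrability
  have IntW : ∀ t : ℕ, Integrable (fun ω => Real.log (1 - W t ω)) μ := by
    intro t
    have h1 : Integrable (fun x => Real.log (1 - x)) (Measure.map (W t) μ) := by
      rw [hlaw t]; exact integrable_log1m_beta ha (hb t)
    exact (integrable_map_measure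
      ((Real.measurable_log.comp (measurable_const.sub measurable_id)).aestronglyMeasurable)
      (hMeas t)).1 h1
  have IntWlog : Integrable (fun ω => Real.log (W (h-1) ω)) μ := by
    have h1 : Integrable Real.log (Measure.map (W (h-1)) μ) := by
      rw [hlaw (h-1)]; exact integrable_log_beta ha (hb (h-1))
    exact (integrable_map_measure Real.measurable_log.aestronglyMeasurable (hMeas (h-1))).1 h1
  -- values
  have EW : ∀ t : ℕ, ∫ ω, Real.log (1 - W t ω) ∂μ
      = digamma (α + ((t:ℝ)+1)*d) - digamma (1 - d + (α + ((t:ℝ)+1)*d)) := by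
    intro t
    have hm2 : Measurable (fun x : ℝ => Real.log (1 - x)) :=
      Real.measurable_log.comp (measurable_const.sub measurable_id)
    have h1 := betaMeasure_log1m_moment ha (hb t)
    rw [← hlaw t, integral_map (hMeas t) hm2.aestronglyMeasurable] at h1
    exact h1
  have ELog : ∫ ω, Real.log (W (h-1) ω) ∂μ
      = digamma (1-d) - digamma (1 - d + (α + (((h-1:ℕ):ℝ)+1)*d)) := by
    have hm2 : Measurable (fun x : ℝ => Real.log x) := Real.measurable_log
    have h1 := betaMeasure_log_moment ha (hb (h-1))
    rw [← hlaw (h-1), integral_map (hMeas (h-1)) hm2.aestronglyMeasurable] at h1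
    exact h1
  -- a.e. splitting of the log
  have haeIoo : ∀ᵐ ω ∂μ, ∀ t : ℕ, W t ω ∈ Ioo (0:ℝ) 1 := ae_all_iff.2 hmemIoo
  have hae : ∀ᵐ ω ∂μ, Real.log (stickWeight W h ω)
      = Real.log (W (h-1) ω) + ∑ t ∈ Finset.range (h-1), Real.log (1 - W t ω) := by
    filter_upwards [haeIoo] with ω hω
    have hprod : (0:ℝ) < ∏ t ∈ Finset.range (h-1), (1 - W t ω) :=
      Finset.prod_pos (fun t _ => by linarith [(hω t).2])
    rw [stickWeight, Real.log_mul (ne_of_gt (hω (h-1)).1) hprod.ne',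
      Real.log_prod (fun t _ => by linarith [(hω t).2])]
  rw [integral_congr_ae hae,
    integral_add IntWlog (integrable_finset_sum _ (fun t _ => IntW t)),
    integral_finset_sum _ (fun t _ => IntW t), ELog,
    Finset.sum_congr rfl (fun t _ => EW t)]
  exact key_algebra d α hd hα h hh
end AuxProofs
end

section
/- Let 0 < d < 1, α > 0, and π_h = V_h ∏_{t=1}^{h-1}(1-V_t) with V_t ~ Beta(1-d, α+td) independent. Then Var(log π_h) = ψ₁(1-d) - ψ₁(α) + (1/d²)(ψ₁(α/d) - ψ₁(α/d + h)). -/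
open MeasureTheory ProbabilityTheory Real Filter Finset
open scoped ENNReal NNReal

namespace PDP

noncomputable def J (k : ℕ) (a b : ℝ) : ℝ :=
  ∫ x in Set.Ioo (0:ℝ) 1, (Real.log x) ^ k * (x ^ (a-1) * (1-x) ^ (b-1))

lemma meas_beta (a b : ℝ) : Measurable (fun x : ℝ => x ^ (a-1) * (1-x) ^ (b-1)) := by
  have h : Measurable (fun x : ℝ => (1:ℝ) - x) := measurable_const.sub measurable_id
  measurability

lemma meas_logpow (k : ℕ) (a b : ℝ) :
    Measurable (fun x : ℝ => (Real.log x) ^ k * (x ^ (a-1) * (1-x) ^ (b-1))) :=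
  (Real.measurable_log.pow_const k).mul (meas_beta a b)

lemma meas_logabspow (k : ℕ) (a b : ℝ) :
    Measurable (fun x : ℝ => |Real.log x| ^ k * (x ^ (a-1) * (1-x) ^ (b-1))) :=
  ((Real.measurable_log.abs).pow_const k).mul (meas_beta a b)

lemma integrableOn_beta {a b : ℝ} (ha : 0 < a) (hb : 0 < b) :
    IntegrableOn (fun x : ℝ => x ^ (a-1) * (1-x) ^ (b-1)) (Set.Ioo 0 1) := by
  have h := (Complex.betaIntegral_convergent (u := a) (v := b) (by simpa) (by simpa)).norm
  rw [intervalIntegrable_iff_integrableOn_Ioc_of_le (by norm_num)] at h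
  refine ((h.mono_set Set.Ioo_subset_Ioc_self).congr_fun ?_ measurableSet_Ioo)
  intro x hx
  obtain ⟨hx0, hx1⟩ := hx
  have h1x : (0:ℝ) < 1 - x := by linarith
  simp only [norm_mul]
  rw [show ((1:ℂ) - (x:ℂ)) = ((1 - x : ℝ) : ℂ) by push_cast; ring]
  rw [Complex.norm_cpow_eq_rpow_re_of_pos hx0, Complex.norm_cpow_eq_rpow_re_of_pos h1x]
  norm_num

lemma logpow_bound {a : ℝ} (ha : 0 < a) (k : ℕ) {x : ℝ} (hx0 : 0 < x) (hx1 : x < 1) :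
    |Real.log x| ^ k * x ^ (a-1) ≤ (2*(k+1)/a) ^ k * x ^ (a/2-1) := by
  set ε : ℝ := a / (2*(k+1)) with hε
  have hεpos : 0 < ε := by positivity
  have hlog : |Real.log x| ≤ x ^ (-ε) / ε := by
    rw [abs_of_nonpos (Real.log_nonpos hx0.le hx1.le), ← Real.log_inv]
    calc Real.log x⁻¹ ≤ (x⁻¹) ^ ε / ε := Real.log_le_rpow_div (by positivity) hεpos
    _ = x ^ (-ε) / ε := by rw [Real.inv_rpow hx0.le, ← Real.rpow_neg hx0.le]
  have h1 : |Real.log x| ^ k * x ^ (a-1) ≤ (x ^ (-ε) / ε) ^ k * x ^ (a-1) :=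
    mul_le_mul_of_nonneg_right (pow_le_pow_left₀ (abs_nonneg _) hlog k)
      (Real.rpow_nonneg hx0.le _)
  refine h1.trans ?_
  have hinv : (2*((k:ℝ)+1)/a) = ε⁻¹ := by rw [hε, inv_div]
  rw [hinv, div_pow, inv_pow, div_mul_eq_mul_div, inv_mul_eq_div]
  gcongr (?_ / _)
  rw [← Real.rpow_natCast (x ^ (-ε)) k, ← Real.rpow_mul hx0.le, ← Real.rpow_add hx0]
  apply Real.rpow_le_rpow_of_exponent_ge hx0 hx1.le
  have hk : (0:ℝ) ≤ (k:ℝ) := by positivity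
  have : ε * k ≤ a / 2 := by
    rw [hε, div_mul_eq_mul_div, div_le_div_iff₀ (by positivity) (by norm_num)]
    nlinarith [ha.le]
  linarith

lemma integrableOn_logabs_beta {a b : ℝ} (ha : 0 < a) (hb : 0 < b) (k : ℕ) :
    IntegrableOn (fun x : ℝ => |Real.log x| ^ k * (x ^ (a-1) * (1-x) ^ (b-1)))
      (Set.Ioo 0 1) := by
  have hint : IntegrableOn
      (fun x : ℝ => (2*(k+1)/a) ^ k * (x ^ (a/2-1) * (1-x) ^ (b-1))) (Set.Ioo 0 1) :=
    (integrableOn_beta (by positivity) hb).const_mul _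
  refine hint.mono' ((meas_logabspow k a b).aestronglyMeasurable) ?_
  refine (ae_restrict_iff' measurableSet_Ioo).2 (ae_of_all _ fun x hx => ?_)
  obtain ⟨hx0, hx1⟩ := hx
  have h1x : (0:ℝ) < 1 - x := by linarith
  have hb1 : (0:ℝ) ≤ (1-x) ^ (b-1) := Real.rpow_nonneg h1x.le _
  rw [norm_of_nonneg (by positivity)]
  calc |Real.log x| ^ k * (x ^ (a-1) * (1-x) ^ (b-1))
      = (|Real.log x| ^ k * x ^ (a-1)) * (1-x) ^ (b-1) := by ring
    _ ≤ ((2*(k+1)/a) ^ k * x ^ (a/2-1)) * (1-x) ^ (b-1) :=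
        mul_le_mul_of_nonneg_right (logpow_bound ha k hx0 hx1) hb1
    _ = (2*(k+1)/a) ^ k * (x ^ (a/2-1) * (1-x) ^ (b-1)) := by ring

lemma integrableOn_log_beta {a b : ℝ} (ha : 0 < a) (hb : 0 < b) (k : ℕ) :
    IntegrableOn (fun x : ℝ => (Real.log x) ^ k * (x ^ (a-1) * (1-x) ^ (b-1)))
      (Set.Ioo 0 1) := by
  refine (integrableOn_logabs_beta ha hb k).mono'
    ((meas_logpow k a b).aestronglyMeasurable) ?_
  refine (ae_restrict_iff' measurableSet_Ioo).2 (ae_of_all _ fun x hx => ?_)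
  obtain ⟨hx0, hx1⟩ := hx
  have h1x : (0:ℝ) < 1 - x := by linarith
  rw [norm_mul, norm_pow, norm_of_nonneg (by positivity : (0:ℝ) ≤ x ^ (a-1) * (1-x) ^ (b-1)),
    Real.norm_eq_abs]


lemma hasDerivAt_rpow_base {x : ℝ} (hx : 0 < x) (a' : ℝ) :
    HasDerivAt (fun y : ℝ => x ^ (y-1)) (Real.log x * x ^ (a'-1)) a' := by
  have h : HasDerivAt (fun y : ℝ => Real.exp (Real.log x * (y-1)))
      (Real.exp (Real.log x * (a'-1)) * Real.log x) a' := by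
    simpa using (((hasDerivAt_id a').sub_const 1).const_mul (Real.log x)).exp
  have hrw : ∀ y : ℝ, Real.exp (Real.log x * (y-1)) = x ^ (y-1) := fun y =>
    (Real.rpow_def_of_pos hx _).symm
  simp only [hrw] at h
  simpa [mul_comm] using h

lemma hasDerivAt_J {b : ℝ} (hb : 0 < b) (k : ℕ) {a : ℝ} (ha : 0 < a) :
    HasDerivAt (fun a' => J k a' b) (J (k+1) a b) a := by
  have ha2 : 0 < a/2 := by positivity
  have main := hasDerivAt_integral_of_dominated_loc_of_deriv_le
    (μ := volume.restrict (Set.Ioo (0:ℝ) 1))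
    (F := fun a' x => (Real.log x)^k * (x ^ (a'-1) * (1-x)^(b-1)))
    (F' := fun a' x => (Real.log x)^(k+1) * (x ^ (a'-1) * (1-x)^(b-1)))
    (x₀ := a) (s := Metric.ball a (a/2))
    (bound := fun x => |Real.log x| ^ (k+1) * (x ^ (a/2-1) * (1-x)^(b-1)))
    (Metric.ball_mem_nhds a ha2)
    (Eventually.of_forall fun a' => (meas_logpow k a' b).aestronglyMeasurable)
    (integrableOn_log_beta ha hb k)
    ((meas_logpow (k+1) a b).aestronglyMeasurable)
    ?_ (integrableOn_logabs_beta ha2 hb (k+1)) ?_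
  · exact main.2
  · refine (ae_restrict_iff' measurableSet_Ioo).2 (ae_of_all _ fun x hx a' ha' => ?_)
    obtain ⟨hx0, hx1⟩ := hx
    have h1x : (0:ℝ) < 1 - x := by linarith
    rw [Metric.mem_ball, Real.dist_eq, abs_lt] at ha'
    have ha'2 : a/2 ≤ a' := by linarith
    rw [norm_mul, norm_pow, Real.norm_eq_abs,
      norm_of_nonneg (by positivity : (0:ℝ) ≤ x ^ (a'-1) * (1-x)^(b-1))]
    have : x ^ (a'-1) ≤ x ^ (a/2-1) :=
      Real.rpow_le_rpow_of_exponent_ge hx0 hx1.le (by linarith)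
    have hb1 : (0:ℝ) ≤ (1-x) ^ (b-1) := Real.rpow_nonneg h1x.le _
    have habs : (0:ℝ) ≤ |Real.log x| ^ (k+1) := by positivity
    nlinarith [mul_le_mul_of_nonneg_right this hb1]
  · refine (ae_restrict_iff' measurableSet_Ioo).2 (ae_of_all _ fun x hx a' _ => ?_)
    obtain ⟨hx0, hx1⟩ := hx
    have h := ((hasDerivAt_rpow_base hx0 a').mul_const ((1-x)^(b-1))).const_mul
      ((Real.log x : ℝ)^k)
    refine h.congr_deriv ?_
    ring

lemma J_zero_eq {a b : ℝ} (ha : 0 < a) (hb : 0 < b) :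
    J 0 a b = Real.Gamma a * Real.Gamma b / Real.Gamma (a+b) := by
  have key := Complex.Gamma_mul_Gamma_eq_betaIntegral (s := (a:ℂ)) (t := (b:ℂ))
    (by simpa using ha) (by simpa using hb)
  have hIoc : J 0 a b = ∫ x in Set.Ioc (0:ℝ) 1, x ^ (a-1) * (1-x) ^ (b-1) := by
    rw [J, MeasureTheory.integral_Ioc_eq_integral_Ioo]
    simp
  have hbeta : Complex.betaIntegral a b = ((J 0 a b : ℝ) : ℂ) := by
    rw [Complex.betaIntegral,
      intervalIntegral.integral_of_le (by norm_num : (0:ℝ) ≤ 1), hIoc]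
    have hcast : ∫ x in Set.Ioc (0:ℝ) 1, (((x ^ (a-1) * (1-x) ^ (b-1) : ℝ)) : ℂ)
        = (((∫ x in Set.Ioc (0:ℝ) 1, x ^ (a-1) * (1-x) ^ (b-1) : ℝ)) : ℂ) := integral_ofReal
    rw [← hcast]
    refine setIntegral_congr_fun measurableSet_Ioc fun x hx => ?_
    obtain ⟨hx0, hx1⟩ := hx
    have h1x : (0:ℝ) ≤ 1 - x := by linarith
    push_cast
    rw [Complex.ofReal_cpow hx0.le, Complex.ofReal_cpow h1x]
    push_cast
    ring_nf
  rw [hbeta, show ((a:ℂ)+(b:ℂ)) = ((a+b:ℝ):ℂ) by norm_num,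
    Complex.Gamma_ofReal, Complex.Gamma_ofReal, Complex.Gamma_ofReal,
    ← Complex.ofReal_mul, ← Complex.ofReal_mul] at key
  have hreal : Real.Gamma a * Real.Gamma b = Real.Gamma (a+b) * J 0 a b :=
    Complex.ofReal_inj.mp key
  have hpos : Real.Gamma (a+b) ≠ 0 := (Real.Gamma_pos_of_pos (by linarith)).ne'
  field_simp [hpos] at hreal ⊢
  linarith [hreal]

lemma J_zero_pos {a b : ℝ} (ha : 0 < a) (hb : 0 < b) : 0 < J 0 a b := by
  rw [J_zero_eq ha hb]
  have := Real.Gamma_pos_of_pos ha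
  have := Real.Gamma_pos_of_pos hb
  have := Real.Gamma_pos_of_pos (show 0 < a + b by linarith)
  positivity


noncomputable def L : ℝ → ℝ := fun y => Real.log (Real.Gamma y)

lemma contDiffAt_Gamma {x : ℝ} (hx : 0 < x) : ContDiffAt ℝ ⊤ Real.Gamma x := by
  have hU : IsOpen {s : ℂ | 0 < s.re} := isOpen_lt continuous_const Complex.continuous_re
  have hdiff : DifferentiableOn ℂ Complex.Gamma {s : ℂ | 0 < s.re} := by
    intro s hs
    refine (Complex.differentiableAt_Gamma s fun m => ?_).differentiableWithinAt
    intro hsm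
    rw [hsm] at hs
    simp only [Set.mem_setOf_eq, Complex.neg_re, Complex.natCast_re] at hs
    have : (0:ℝ) ≤ m := Nat.cast_nonneg m
    linarith
  have hAn : AnalyticAt ℂ Complex.Gamma (x:ℂ) :=
    (hdiff.analyticOnNhd hU) _ (by simpa using hx)
  have h2 : AnalyticAt ℝ (fun y : ℝ => Complex.Gamma (y:ℂ)) x :=
    (hAn.restrictScalars).comp (Complex.ofRealCLM.analyticAt x)
  have h3 : AnalyticAt ℝ (fun y : ℝ => (Complex.Gamma (y:ℂ)).re) x :=
    (Complex.reCLM.analyticAt _).comp h2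
  have heq : Real.Gamma = fun y : ℝ => (Complex.Gamma (y:ℂ)).re := by
    funext y
    rw [Complex.Gamma_ofReal, Complex.ofReal_re]
  rw [heq]
  exact h3.contDiffAt

lemma contDiffAt_L {x : ℝ} (hx : 0 < x) : ContDiffAt ℝ ⊤ L x := by
  have hg : (0:ℝ) < Real.Gamma x := Real.Gamma_pos_of_pos hx
  exact (Real.contDiffAt_log.2 hg.ne').comp x (contDiffAt_Gamma hx)

lemma contDiffOn_L : ContDiffOn ℝ ⊤ L (Set.Ioi 0) :=
  fun x hx => (contDiffAt_L hx).contDiffWithinAt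

lemma hasDerivAt_L {x : ℝ} (hx : 0 < x) : HasDerivAt L (digamma x) x := by
  have := ((contDiffAt_L hx).differentiableAt (by simp)).hasDerivAt
  exact this

lemma diffOn_digamma : DifferentiableOn ℝ (deriv L) (Set.Ioi (0:ℝ)) := by
  exact (contDiffOn_L.deriv_of_isOpen isOpen_Ioi (m := 1) le_top).differentiableOn (by norm_num)

lemma hasDerivAt_digamma {x : ℝ} (hx : 0 < x) : HasDerivAt digamma (trigamma x) x := by
  have h : DifferentiableAt ℝ (deriv L) x :=
    (diffOn_digamma.differentiableAt (Ioi_mem_nhds hx))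
  have := h.hasDerivAt
  exact this

lemma digamma_add_one {x : ℝ} (hx : 0 < x) : digamma (x+1) = x⁻¹ + digamma x := by
  have hshift : ∀ y : ℝ, 0 < y → L (y+1) = Real.log y + L y := by
    intro y hy
    simp only [L]
    rw [Real.Gamma_add_one hy.ne', Real.log_mul hy.ne' (Real.Gamma_pos_of_pos hy).ne']
  have h1 : HasDerivAt (fun y : ℝ => L (y+1)) (digamma (x+1)) x := by
    have := (hasDerivAt_L (show (0:ℝ) < x + 1 by linarith)).comp x
      ((hasDerivAt_id x).add_const 1)
    simpa [Function.comp_def] using this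
  have h2 : HasDerivAt (fun y : ℝ => Real.log y + L y) (x⁻¹ + digamma x) x :=
    (Real.hasDerivAt_log hx.ne').add (hasDerivAt_L hx)
  have heq : (fun y : ℝ => L (y+1)) =ᶠ[nhds x] (fun y : ℝ => Real.log y + L y) := by
    filter_upwards [Ioi_mem_nhds hx] with y hy
    exact hshift y hy
  exact h1.unique (h2.congr_of_eventuallyEq heq)

lemma trigamma_add_one {x : ℝ} (hx : 0 < x) : trigamma (x+1) = trigamma x - 1/x^2 := by
  have h1 : HasDerivAt (fun y : ℝ => digamma (y+1)) (trigamma (x+1)) x := by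
    have := (hasDerivAt_digamma (show (0:ℝ) < x + 1 by linarith)).comp x
      ((hasDerivAt_id x).add_const 1)
    simpa [Function.comp_def] using this
  have h2 : HasDerivAt (fun y : ℝ => y⁻¹ + digamma y) (-(x^2)⁻¹ + trigamma x) x :=
    (hasDerivAt_inv hx.ne').add (hasDerivAt_digamma hx)
  have heq : (fun y : ℝ => digamma (y+1)) =ᶠ[nhds x] (fun y : ℝ => y⁻¹ + digamma y) := by
    filter_upwards [Ioi_mem_nhds hx] with y hy
    exact digamma_add_one hy
  have := h1.unique (h2.congr_of_eventuallyEq heq)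
  rw [this]
  ring

lemma key_var {a b : ℝ} (ha : 0 < a) (hb : 0 < b) :
    J 2 a b / J 0 a b - (J 1 a b / J 0 a b)^2 = trigamma a - trigamma (a+b) := by
  -- the logarithmic derivative of a' ↦ J 0 a' b
  have hD1 : ∀ a' : ℝ, 0 < a' →
      HasDerivAt (fun y => Real.log (J 0 y b)) (J 1 a' b / J 0 a' b) a' := by
    intro a' ha'
    exact (hasDerivAt_J hb 0 ha').log (J_zero_pos ha' hb).ne'
  have hD2 : ∀ a' : ℝ, 0 < a' →
      HasDerivAt (fun y => L y + L b - L (y+b)) (digamma a' - digamma (a'+b)) a' := by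
    intro a' ha'
    have hc : HasDerivAt (fun y : ℝ => L (y+b)) (digamma (a'+b)) a' := by
      have := (hasDerivAt_L (show (0:ℝ) < a' + b by linarith)).comp a'
        ((hasDerivAt_id a').add_const b)
      simpa [Function.comp_def] using this
    exact (((hasDerivAt_L ha').add_const (L b)).sub hc)
  have heqfun : ∀ y : ℝ, 0 < y → Real.log (J 0 y b) = L y + L b - L (y+b) := by
    intro y hy
    rw [J_zero_eq hy hb, Real.log_div
      (mul_pos (Real.Gamma_pos_of_pos hy) (Real.Gamma_pos_of_pos hb)).ne'
      (Real.Gamma_pos_of_pos (by linarith : (0:ℝ) < y + b)).ne',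
      Real.log_mul (Real.Gamma_pos_of_pos hy).ne' (Real.Gamma_pos_of_pos hb).ne']
    rfl
  -- first derivatives agree on Ioi 0
  have hder_eq : ∀ a' : ℝ, 0 < a' →
      J 1 a' b / J 0 a' b = digamma a' - digamma (a'+b) := by
    intro a' ha'
    have heq : (fun y => Real.log (J 0 y b)) =ᶠ[nhds a'] (fun y => L y + L b - L (y+b)) := by
      filter_upwards [Ioi_mem_nhds ha'] with y hy
      exact heqfun y hy
    exact (hD1 a' ha').unique ((hD2 a' ha').congr_of_eventuallyEq heq)
  -- second derivatives
  have hB : HasDerivAt (fun a' => J 1 a' b / J 0 a' b)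
      (J 2 a b / J 0 a b - (J 1 a b / J 0 a b)^2) a := by
    have := (hasDerivAt_J hb 1 ha).div (hasDerivAt_J hb 0 ha) (J_zero_pos ha hb).ne'
    refine this.congr_deriv ?_
    have h0 : J 0 a b ≠ 0 := (J_zero_pos ha hb).ne'
    field_simp
  have hC : HasDerivAt (fun a' => digamma a' - digamma (a'+b))
      (trigamma a - trigamma (a+b)) a := by
    have hc : HasDerivAt (fun y : ℝ => digamma (y+b)) (trigamma (a+b)) a := by
      have := (hasDerivAt_digamma (show (0:ℝ) < a + b by linarith)).comp a
        ((hasDerivAt_id a).add_const b)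
      simpa [Function.comp_def] using this
    exact (hasDerivAt_digamma ha).sub hc
  have heq2 : (fun a' => J 1 a' b / J 0 a' b) =ᶠ[nhds a]
      (fun a' => digamma a' - digamma (a'+b)) := by
    filter_upwards [Ioi_mem_nhds ha] with y hy
    exact hder_eq y hy
  exact hB.unique (hC.congr_of_eventuallyEq heq2)

lemma trigamma_telescope {x : ℝ} (hx : 0 < x) (n : ℕ) :
    trigamma x - trigamma (x + n) = ∑ s ∈ Finset.range n, 1/(x+s)^2 := by
  induction n with
  | zero => simp
  | succ n ih =>
    have hxn : (0:ℝ) < x + n := by positivity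
    have : trigamma (x + (n+1) : ℝ) = trigamma (x+n) - 1/(x+n)^2 := by
      have := trigamma_add_one hxn
      rw [show (x + (n:ℝ)) + 1 = x + ((n:ℝ)+1) by ring] at this
      exact_mod_cast this
    rw [Finset.sum_range_succ, ← ih]
    push_cast
    rw [this]
    ring


/-- the normalizing constant -/
noncomputable def C (a b : ℝ) : ℝ := Real.Gamma (a+b) / (Real.Gamma a * Real.Gamma b)

lemma C_pos {a b : ℝ} (ha : 0 < a) (hb : 0 < b) : 0 < C a b := by
  have h1 := Real.Gamma_pos_of_pos ha
  have h2 := Real.Gamma_pos_of_pos hb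
  have h3 := Real.Gamma_pos_of_pos (show (0:ℝ) < a + b by linarith)
  rw [C]; positivity

lemma C_eq_inv_J {a b : ℝ} (ha : 0 < a) (hb : 0 < b) : C a b = (J 0 a b)⁻¹ := by
  rw [J_zero_eq ha hb, C]
  rw [inv_div]

noncomputable def pdfIn (a b : ℝ) (x : ℝ) : ℝ := C a b * (x ^ (a-1) * (1-x) ^ (b-1))

lemma meas_pdfIn (a b : ℝ) : Measurable (pdfIn a b) := by
  have := meas_logpow 0 a b
  simp only [pow_zero, one_mul] at this
  exact this.const_mul (C a b)

lemma betaPDF_eq (a b : ℝ) (x : ℝ) :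
    _root_.betaPDF a b x = ENNReal.ofReal (Set.indicator (Set.Ioo 0 1) (pdfIn a b) x) := by
  rw [_root_.betaPDF]
  congr 1
  by_cases hx : x ∈ Set.Ioo (0:ℝ) 1
  · rw [Set.indicator_of_mem hx, pdfIn, C]
    obtain ⟨h0, h1⟩ := hx
    rw [if_pos ⟨h0, h1⟩]
    ring
  · rw [Set.indicator_of_notMem hx, if_neg (by simpa [Set.mem_Ioo] using hx)]

lemma betaPDF_toReal {a b : ℝ} (ha : 0 < a) (hb : 0 < b) (x : ℝ) :
    (_root_.betaPDF a b x).toReal = Set.indicator (Set.Ioo 0 1) (pdfIn a b) x := by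
  rw [betaPDF_eq, ENNReal.toReal_ofReal]
  by_cases hx : x ∈ Set.Ioo (0:ℝ) 1
  · rw [Set.indicator_of_mem hx, pdfIn]
    have h0 : (0:ℝ) < x := hx.1
    have h1 : (0:ℝ) < 1 - x := by have := hx.2; linarith
    have := C_pos ha hb
    positivity
  · rw [Set.indicator_of_notMem hx]

lemma pdfIn_indicator_nonneg {a b : ℝ} (ha : 0 < a) (hb : 0 < b) (x : ℝ) :
    0 ≤ Set.indicator (Set.Ioo 0 1) (pdfIn a b) x := by
  apply Set.indicator_nonneg
  intro y hy
  have h0 : (0:ℝ) < y := hy.1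
  have h1 : (0:ℝ) < 1 - y := by have := hy.2; linarith
  have := C_pos ha hb
  rw [pdfIn]; positivity

lemma meas_betaPDF (a b : ℝ) : Measurable (_root_.betaPDF a b) := by
  have : _root_.betaPDF a b = fun x => ENNReal.ofReal (Set.indicator (Set.Ioo 0 1) (pdfIn a b) x) :=
    funext (betaPDF_eq a b)
  rw [this]
  exact ((meas_pdfIn a b).indicator measurableSet_Ioo).ennreal_ofReal

lemma integrable_betaMeasure {a b : ℝ} (ha : 0 < a) (hb : 0 < b) {g : ℝ → ℝ}
    (hg : Measurable g)
    (hint : IntegrableOn (fun x => g x * (x ^ (a-1) * (1-x) ^ (b-1))) (Set.Ioo 0 1)) :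
    Integrable g (_root_.betaMeasure a b) := by
  rw [_root_.betaMeasure, integrable_withDensity_iff (meas_betaPDF a b)
    (ae_of_all _ fun x => by rw [betaPDF_eq]; exact ENNReal.ofReal_lt_top)]
  have heq : (fun x => g x * (_root_.betaPDF a b x).toReal)
      = Set.indicator (Set.Ioo 0 1) (fun x => g x * pdfIn a b x) := by
    funext x
    rw [betaPDF_toReal ha hb, ← Set.indicator_mul_right]
  rw [heq, integrable_indicator_iff measurableSet_Ioo]
  have : (fun x => g x * pdfIn a b x)
      = fun x => C a b * (g x * (x ^ (a-1) * (1-x) ^ (b-1))) := by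
    funext x; rw [pdfIn]; ring
  rw [this]
  exact hint.const_mul _

lemma integral_betaMeasure {a b : ℝ} (ha : 0 < a) (hb : 0 < b) (g : ℝ → ℝ) :
    ∫ x, g x ∂(_root_.betaMeasure a b)
      = C a b * ∫ x in Set.Ioo (0:ℝ) 1, g x * (x ^ (a-1) * (1-x) ^ (b-1)) := by
  have hnn := pdfIn_indicator_nonneg ha hb
  set q : ℝ → ℝ := Set.indicator (Set.Ioo 0 1) (pdfIn a b) with hq
  have hpdf : _root_.betaPDF a b = fun x => ((q x).toNNReal : ℝ≥0∞) := by
    funext x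
    rw [betaPDF_eq]
    rfl
  rw [_root_.betaMeasure, hpdf]
  rw [integral_withDensity_eq_integral_smul (f := fun x => (q x).toNNReal)
    (show Measurable fun x => (q x).toNNReal from
      measurable_real_toNNReal.comp ((meas_pdfIn a b).indicator measurableSet_Ioo)) g]
  have heq : (fun x => (q x).toNNReal • g x)
      = Set.indicator (Set.Ioo 0 1)
        (fun x => C a b * (g x * (x ^ (a-1) * (1-x) ^ (b-1)))) := by
    funext x
    rw [NNReal.smul_def, smul_eq_mul, Real.coe_toNNReal _ (hnn x), hq]
    rw [← Set.indicator_mul_left]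
    by_cases hx : x ∈ Set.Ioo (0:ℝ) 1
    · rw [Set.indicator_of_mem hx, Set.indicator_of_mem hx, pdfIn]; ring
    · rw [Set.indicator_of_notMem hx, Set.indicator_of_notMem hx]
  rw [heq, integral_indicator measurableSet_Ioo, integral_const_mul]

lemma isProbability_betaMeasure {a b : ℝ} (ha : 0 < a) (hb : 0 < b) :
    IsProbabilityMeasure (_root_.betaMeasure a b) := by
  constructor
  have h := integral_betaMeasure ha hb (fun _ => (1:ℝ))
  simp only [one_mul] at h
  have hint : ∫ x, (1:ℝ) ∂(_root_.betaMeasure a b) = C a b * J 0 a b := by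
    rw [h]; congr 1
    rw [show (J 0 a b : ℝ) = ∫ x in Set.Ioo (0:ℝ) 1, x ^ (a-1) * (1-x) ^ (b-1) by simp [J]]
  rw [C_eq_inv_J ha hb, inv_mul_cancel₀ (J_zero_pos ha hb).ne'] at hint
  have hfin : Integrable (fun _ => (1:ℝ)) (_root_.betaMeasure a b) := by
    apply integrable_betaMeasure ha hb measurable_const
    simpa using integrableOn_log_beta ha hb 0
  rw [integral_const, smul_eq_mul, mul_one] at hint
  have := congrArg ENNReal.ofReal hint
  rwa [Measure.real, ENNReal.ofReal_toReal, ENNReal.ofReal_one] at this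
  -- measure univ ≠ ⊤
  · intro htop
    rw [Measure.real, htop] at hint
    simp at hint


-- flip x ↦ 1 - x
lemma flip_integral (f : ℝ → ℝ) :
    ∫ x in Set.Ioo (0:ℝ) 1, f (1-x) = ∫ x in Set.Ioo (0:ℝ) 1, f x := by
  have hmp : MeasurePreserving (fun x : ℝ => 1 - x) volume volume :=
    Measure.measurePreserving_sub_left volume 1
  have hemb : MeasurableEmbedding (fun x : ℝ => 1 - x) :=
    (Homeomorph.subLeft (1:ℝ)).measurableEmbedding
  have hpre : (fun x : ℝ => 1 - x) ⁻¹' (Set.Ioo 0 1) = Set.Ioo 0 1 := by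
    ext x
    simp only [Set.mem_preimage, Set.mem_Ioo]
    constructor <;> rintro ⟨h1, h2⟩ <;> constructor <;> linarith
  have := hmp.setIntegral_preimage_emb hemb f (Set.Ioo 0 1)
  rwa [hpre] at this

lemma flip_integrableOn {f : ℝ → ℝ} (hf : IntegrableOn f (Set.Ioo (0:ℝ) 1)) :
    IntegrableOn (fun x => f (1-x)) (Set.Ioo (0:ℝ) 1) := by
  have hmp : MeasurePreserving (fun x : ℝ => 1 - x) volume volume :=
    Measure.measurePreserving_sub_left volume 1
  have hemb : MeasurableEmbedding (fun x : ℝ => 1 - x) :=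
    (Homeomorph.subLeft (1:ℝ)).measurableEmbedding
  have hpre : (fun x : ℝ => 1 - x) ⁻¹' (Set.Ioo 0 1) = Set.Ioo 0 1 := by
    ext x
    simp only [Set.mem_preimage, Set.mem_Ioo]
    constructor <;> rintro ⟨h1, h2⟩ <;> constructor <;> linarith
  have := (hmp.integrableOn_comp_preimage hemb (f := f) (s := Set.Ioo 0 1)).2 hf
  rwa [hpre] at this

lemma integrableOn_log1m_beta {a b : ℝ} (ha : 0 < a) (hb : 0 < b) (k : ℕ) :
    IntegrableOn (fun x : ℝ => (Real.log (1-x)) ^ k * (x ^ (a-1) * (1-x) ^ (b-1)))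
      (Set.Ioo 0 1) := by
  have h := flip_integrableOn (integrableOn_log_beta hb ha k)
  refine h.congr_fun (fun x hx => ?_) measurableSet_Ioo
  show Real.log (1-x) ^ k * ((1-x) ^ (b-1) * (1-(1-x)) ^ (a-1)) = _
  rw [show (1:ℝ)-(1-x) = x by ring]
  ring

lemma integral_log1m_beta (a b : ℝ) (k : ℕ) :
    ∫ x in Set.Ioo (0:ℝ) 1, (Real.log (1-x)) ^ k * (x ^ (a-1) * (1-x) ^ (b-1))
      = J k b a := by
  calc ∫ x in Set.Ioo (0:ℝ) 1, (Real.log (1-x)) ^ k * (x ^ (a-1) * (1-x) ^ (b-1))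
      = ∫ x in Set.Ioo (0:ℝ) 1,
          (fun y : ℝ => (Real.log y) ^ k * (y ^ (b-1) * (1-y) ^ (a-1))) (1-x) := by
        refine setIntegral_congr_fun measurableSet_Ioo fun x hx => ?_
        show _ = Real.log (1-x) ^ k * ((1-x) ^ (b-1) * (1-(1-x)) ^ (a-1))
        rw [show (1:ℝ)-(1-x) = x by ring]
        ring
    _ = J k b a := by
        unfold J
        have h := flip_integral (fun y : ℝ => Real.log y ^ k * (y ^ (b-1) * (1-y) ^ (a-1)))
        simpa using h

-- variance over _root_.betaMeasure
lemma memℒp_log_beta {a b : ℝ} (ha : 0 < a) (hb : 0 < b) :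
    MemLp (fun x : ℝ => Real.log x) 2 (_root_.betaMeasure a b) := by
  refine (memLp_two_iff_integrable_sq Real.measurable_log.aestronglyMeasurable).2 ?_
  refine integrable_betaMeasure ha hb (by measurability) ?_
  exact integrableOn_log_beta ha hb 2

lemma memℒp_log1m_beta {a b : ℝ} (ha : 0 < a) (hb : 0 < b) :
    MemLp (fun x : ℝ => Real.log (1-x)) 2 (_root_.betaMeasure a b) := by
  have hm : Measurable (fun x : ℝ => Real.log (1-x)) :=
    Real.measurable_log.comp (measurable_const.sub measurable_id)
  refine (memLp_two_iff_integrable_sq hm.aestronglyMeasurable).2 ?_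
  refine integrable_betaMeasure ha hb (by measurability) ?_
  exact integrableOn_log1m_beta ha hb 2

lemma var_log_beta {a b : ℝ} (ha : 0 < a) (hb : 0 < b) :
    variance (fun x : ℝ => Real.log x) (_root_.betaMeasure a b) = trigamma a - trigamma (a+b) := by
  have := isProbability_betaMeasure ha hb
  rw [variance_eq_sub (memℒp_log_beta ha hb)]
  have h2 : (_root_.betaMeasure a b)[(fun x : ℝ => Real.log x) ^ 2] = C a b * J 2 a b := by
    rw [show ((fun x : ℝ => Real.log x) ^ 2) = fun x : ℝ => (Real.log x)^2 by
      funext x; simp [pow_two]]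
    rw [integral_betaMeasure ha hb]
    rfl
  have h1 : (_root_.betaMeasure a b)[fun x : ℝ => Real.log x] = C a b * J 1 a b := by
    rw [integral_betaMeasure ha hb]
    congr 1
    rw [J]
    congr 1
    funext x
    rw [pow_one]
  have hkey : (J 0 a b)⁻¹ * J 2 a b - ((J 0 a b)⁻¹ * J 1 a b)^2
      = trigamma a - trigamma (a+b) := by
    rw [← key_var ha hb, div_eq_inv_mul, div_eq_inv_mul]
  rw [h1, h2, C_eq_inv_J ha hb, hkey]

lemma var_log1m_beta {a b : ℝ} (ha : 0 < a) (hb : 0 < b) :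
    variance (fun x : ℝ => Real.log (1-x)) (_root_.betaMeasure a b)
      = trigamma b - trigamma (a+b) := by
  have := isProbability_betaMeasure ha hb
  rw [variance_eq_sub (memℒp_log1m_beta ha hb)]
  have h2 : (_root_.betaMeasure a b)[(fun x : ℝ => Real.log (1-x)) ^ 2] = C a b * J 2 b a := by
    rw [show ((fun x : ℝ => Real.log (1-x)) ^ 2) = fun x : ℝ => (Real.log (1-x))^2 by
      funext x; simp [pow_two]]
    rw [integral_betaMeasure ha hb, integral_log1m_beta]
  have h1 : (_root_.betaMeasure a b)[fun x : ℝ => Real.log (1-x)] = C a b * J 1 b a := by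
    rw [integral_betaMeasure ha hb]
    rw [show (∫ x in Set.Ioo (0:ℝ) 1, Real.log (1-x) * (x ^ (a-1) * (1-x) ^ (b-1)))
      = ∫ x in Set.Ioo (0:ℝ) 1, (Real.log (1-x))^1 * (x ^ (a-1) * (1-x) ^ (b-1)) by
        congr 1; funext x; rw [pow_one]]
    rw [integral_log1m_beta]
  have hC : C a b = C b a := by rw [C, C, add_comm a b, mul_comm]
  have hkey : (J 0 b a)⁻¹ * J 2 b a - ((J 0 b a)⁻¹ * J 1 b a)^2
      = trigamma b - trigamma (b+a) := by
    rw [← key_var hb ha, div_eq_inv_mul, div_eq_inv_mul]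
  rw [h1, h2, hC, C_eq_inv_J hb ha, hkey, add_comm b a]

-- transfer of variance along a map
lemma variance_comp_map {Ω : Type*} [MeasurableSpace Ω] {μ : Measure Ω}
    [IsProbabilityMeasure μ] {f : Ω → ℝ} (hf : AEMeasurable f μ)
    [IsProbabilityMeasure (Measure.map f μ)]
    {g : ℝ → ℝ} (hg : Measurable g) (hgl : MemLp g 2 (Measure.map f μ)) :
    variance (fun ω => g (f ω)) μ = variance g (Measure.map f μ) := by
  have hmem : MemLp (g ∘ f) 2 μ :=
    (memLp_map_measure_iff hg.aestronglyMeasurable hf).1 hgl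
  rw [variance_eq_sub hgl, variance_eq_sub (show MemLp (fun ω => g (f ω)) 2 μ from hmem)]
  have e1 : μ[fun ω => g (f ω)] = (Measure.map f μ)[g] :=
    (integral_map hf hg.aestronglyMeasurable).symm
  have e2 : μ[(fun ω => g (f ω)) ^ 2] = (Measure.map f μ)[g ^ 2] := by
    have : ((fun ω => g (f ω)) ^ 2) = fun ω => (g ^ 2) (f ω) := by
      funext ω; simp [pow_two]
    rw [this]
    exact (integral_map hf (hg.pow_const 2).aestronglyMeasurable).symm
  rw [e1, e2]


lemma variance_congr_ae {Ω : Type*} [MeasurableSpace Ω] {μ : Measure Ω} {X Y : Ω → ℝ}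
    (hXY : X =ᵐ[μ] Y) : variance X μ = variance Y μ := by
  unfold ProbabilityTheory.variance ProbabilityTheory.evariance
  rw [integral_congr_ae hXY]
  congr 1
  apply lintegral_congr_ae
  filter_upwards [hXY] with ω hω
  rw [hω]


end PDP

open PDP in
theorem pdp_variance_log_stick_weight {Ω : Type*} [MeasurableSpace Ω] (μ : Measure Ω)
    [IsProbabilityMeasure μ] (d α : ℝ) (hd : 0 < d) (hd1 : d < 1) (hα : 0 < α)
    (W : ℕ → Ω → ℝ)
    (hind : iIndepFun W μ)
    (hlaw : ∀ t : ℕ, Measure.map (W t) μ = _root_.betaMeasure (1 - d) (α + (t + 1) * d))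
    (h : ℕ) (hh : 1 ≤ h) :
    ProbabilityTheory.variance (fun ω => Real.log (stickWeight W h ω)) μ =
      trigamma (1 - d) - trigamma α +
        (1 / d ^ 2) * (trigamma (α / d) - trigamma (α / d + h)) := by
  have ha : (0:ℝ) < 1 - d := by linarith
  have hb : ∀ t : ℕ, (0:ℝ) < α + (t + 1) * d := by
    intro t
    have : (0:ℝ) ≤ (t:ℝ) := Nat.cast_nonneg t
    nlinarith
  -- probability instances and measurability
  have hprob : ∀ t : ℕ, IsProbabilityMeasure (Measure.map (W t) μ) := by
    intro t
    rw [hlaw t]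
    exact isProbability_betaMeasure ha (hb t)
  have hWae : ∀ t : ℕ, AEMeasurable (W t) μ := by
    intro t
    by_contra hc
    have h0 := Measure.map_of_not_aemeasurable hc
    have := (hprob t).measure_univ
    rw [h0] at this
    simp at this
  -- a.e. the W's are in (0,1)
  have haeIoo : ∀ᵐ ω ∂μ, ∀ t : ℕ, W t ω ∈ Set.Ioo (0:ℝ) 1 := by
    rw [ae_all_iff]
    intro t
    have hpdf0 : ∀ x ∈ (Set.Ioo (0:ℝ) 1)ᶜ, _root_.betaPDF (1-d) (α + (t+1)*d) x = 0 := by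
      intro x hx
      rw [_root_.betaPDF, if_neg (by simpa [Set.mem_Ioo] using hx)]
      simp
    have hmap0 : Measure.map (W t) μ ((Set.Ioo (0:ℝ) 1)ᶜ) = 0 := by
      rw [hlaw t, _root_.betaMeasure, withDensity_apply _ measurableSet_Ioo.compl]
      rw [setLIntegral_congr_fun measurableSet_Ioo.compl hpdf0]
      simp
    have hpre := Measure.map_apply_of_aemeasurable (hWae t)
      (s := (Set.Ioo (0:ℝ) 1)ᶜ) measurableSet_Ioo.compl
    rw [hmap0] at hpre
    rw [ae_iff]
    have hset : {ω | ¬ W t ω ∈ Set.Ioo (0:ℝ) 1} = W t ⁻¹' (Set.Ioo (0:ℝ) 1)ᶜ := by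
      ext ω; simp
    rw [hset]
    exact hpre.symm
  obtain ⟨m, rfl⟩ : ∃ m, h = m + 1 := ⟨h - 1, (Nat.sub_add_cancel hh).symm⟩
  -- the summands
  set g : ℕ → ℝ → ℝ := fun t x => if t = m then Real.log x else Real.log (1-x) with hg_def
  have hgt_pos : ∀ t : ℕ, t = m → g t = fun x : ℝ => Real.log x := by
    intro t ht; funext x; simp [hg_def, ht]
  have hgt_neg : ∀ t : ℕ, t ≠ m → g t = fun x : ℝ => Real.log (1-x) := by
    intro t ht; funext x; simp [hg_def, ht]
  have hg : ∀ t, Measurable (g t) := by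
    intro t
    by_cases ht : t = m
    · rw [hgt_pos t ht]; exact Real.measurable_log
    · rw [hgt_neg t ht]
      exact Real.measurable_log.comp (measurable_const.sub measurable_id)
  set Y : ℕ → Ω → ℝ := fun t => g t ∘ W t with hY_def
  have hgmem : ∀ t : ℕ, MemLp (g t) 2 (Measure.map (W t) μ) := by
    intro t
    rw [hlaw t]
    by_cases ht : t = m
    · rw [hgt_pos t ht]; exact memℒp_log_beta ha (hb t)
    · rw [hgt_neg t ht]; exact memℒp_log1m_beta ha (hb t)
  have hYmem : ∀ t : ℕ, t ∈ Finset.range (m+1) → MemLp (Y t) 2 μ := by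
    intro t _
    exact (memLp_map_measure_iff (hg t).aestronglyMeasurable (hWae t)).1 (hgmem t)
  have hpair : Set.Pairwise ↑(Finset.range (m+1)) fun i j => IndepFun (Y i) (Y j) μ := by
    intro i _ j _ hij
    exact (hind.indepFun hij).comp (hg i) (hg j)
  -- a.e. identification of the log stick weight with the sum
  have haesum : (fun ω => Real.log (stickWeight W (m+1) ω))
      =ᵐ[μ] ∑ t ∈ Finset.range (m+1), Y t := by
    filter_upwards [haeIoo] with ω hω
    have hWpos : ∀ t, 0 < W t ω := fun t => (hω t).1
    have hW1 : ∀ t, W t ω < 1 := fun t => (hω t).2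
    have hprod_pos : ∀ t ∈ Finset.range m, (0:ℝ) < 1 - W t ω := by
      intro t _
      have := hW1 t; linarith
    have hsum_apply : (∑ t ∈ Finset.range (m+1), Y t) ω
        = ∑ t ∈ Finset.range (m+1), Y t ω := by simp
    rw [hsum_apply, Finset.sum_range_succ]
    have hYlast : Y m ω = Real.log (W m ω) := by
      show g m (W m ω) = _
      rw [hgt_pos m rfl]
    have hYother : ∀ t ∈ Finset.range m, Y t ω = Real.log (1 - W t ω) := by
      intro t ht
      have htne : t ≠ m := Nat.ne_of_lt (Finset.mem_range.1 ht)
      show g t (W t ω) = _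
      rw [hgt_neg t htne]
    rw [hYlast, Finset.sum_congr rfl hYother]
    show Real.log (W (m+1-1) ω * ∏ t ∈ Finset.range (m+1-1), (1 - W t ω)) = _
    simp only [Nat.add_sub_cancel]
    rw [Real.log_mul (hWpos _).ne' (Finset.prod_pos hprod_pos).ne']
    rw [Real.log_prod (fun t ht => (hprod_pos t ht).ne')]
    ring
  rw [variance_congr_ae haesum]
  rw [IndepFun.variance_sum hYmem hpair]
  -- compute each variance
  have hvar : ∀ t ∈ Finset.range (m+1), variance (Y t) μ =
      (if t = m then trigamma (1-d) - trigamma ((1-d) + (α + (t+1)*d))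
        else trigamma (α + (t+1)*d) - trigamma ((1-d) + (α + (t+1)*d))) := by
    intro t _
    have := hprob t
    have hvc : variance (Y t) μ = variance (g t) (Measure.map (W t) μ) :=
      variance_comp_map (hWae t) (hg t) (hgmem t)
    rw [hvc, hlaw t]
    by_cases ht : t = m
    · rw [if_pos ht, hgt_pos t ht]
      exact var_log_beta ha (hb t)
    · rw [if_neg ht, hgt_neg t ht]
      exact var_log1m_beta ha (hb t)
  rw [Finset.sum_congr rfl hvar]
  -- now pure arithmetic with trigamma identities
  have hfd : ∀ t : ℕ, (0:ℝ) < α + t*d := by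
    intro t
    have : (0:ℝ) ≤ (t:ℝ) := Nat.cast_nonneg t
    nlinarith
  have hshift : ∀ t : ℕ, trigamma ((1-d) + (α + (t+1)*d))
      = trigamma (α + t*d) - 1/(α + t*d)^2 := by
    intro t
    rw [show (1-d) + (α + ((t:ℝ)+1)*d) = (α + (t:ℝ)*d) + 1 by ring]
    exact trigamma_add_one (hfd t)
  rw [Finset.sum_range_succ, if_pos rfl]
  have hother : ∀ t ∈ Finset.range m,
      (if t = m then trigamma (1-d) - trigamma ((1-d) + (α + (t+1)*d))
        else trigamma (α + (t+1)*d) - trigamma ((1-d) + (α + (t+1)*d)))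
      = (trigamma (α + ((t+1:ℕ))*d) - trigamma (α + t*d)) + 1/(α + t*d)^2 := by
    intro t ht
    have htne : t ≠ m := Nat.ne_of_lt (Finset.mem_range.1 ht)
    rw [if_neg htne, hshift t]
    push_cast
    ring
  rw [Finset.sum_congr rfl hother, Finset.sum_add_distrib]
  have htel1 : ∑ t ∈ Finset.range m,
      (trigamma (α + ((t+1:ℕ))*d) - trigamma (α + t*d))
      = trigamma (α + (m:ℕ)*d) - trigamma (α + ((0:ℕ):ℝ)*d) := by
    exact Finset.sum_range_sub (f := fun t : ℕ => trigamma (α + t*d)) (n := m)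
  have hGsum : ∑ t ∈ Finset.range m, 1/(α + t*d)^2 + 1/(α + (m:ℝ)*d)^2
      = ∑ t ∈ Finset.range (m+1), 1/(α + t*d)^2 := by
    rw [Finset.sum_range_succ]
  have hGval : ∑ t ∈ Finset.range (m+1), 1/(α + t*d)^2
      = (1/d^2) * (trigamma (α/d) - trigamma (α/d + (m+1:ℕ))) := by
    have hαd : (0:ℝ) < α/d := by positivity
    rw [trigamma_telescope hαd (m+1), Finset.mul_sum]
    refine Finset.sum_congr rfl fun t _ => ?_
    rw [show α + (t:ℝ)*d = d*(α/d + t) by field_simp]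
    rw [mul_pow]
    rw [one_div, one_div, one_div, mul_inv]
  rw [htel1, hshift m]
  have h0 : trigamma (α + ((0:ℕ):ℝ)*d) = trigamma α := by norm_num
  rw [h0]
  rw [← hGval, ← hGsum]
  ring
end
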